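/- Assume c(δ) = −1. Then Σ_c = Δ(c); that is, a positive root α with c(α) = 0 satisfies p(α) > p(β⁽¹⁾) + ⋯ + p(β⁽ᵏ⁾) for every decomposition α = β⁽¹⁾ + ⋯ + β⁽ᵏ⁾ with k ≥ 2 and all β⁽ⁱ⁾ ∈ R_c⁺ if and only if α cannot be written as a sum of two elements of R_c⁺. -/

import Mathlib

open Finset

namespace AffineRoots

/-- The vertex set `I = {0,1,…,r}` of the graph. -/
abbrev I (r : ℕ) := Fin (r + 1)

/-- The root lattice `Q = ℤ^I`. -/
abbrev Q (r : ℕ) := I r → ℤ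

variable (r : ℕ)

/-- The standard basis vector (simple root) `e_i` of `Q`. -/
def e (i : I r) : Q r := Pi.single i 1

/-- The Cartan pairing matrix `(e_i, e_j) = 2·[i=j] − a_{ij}` attached to a graph with
`a i j` edges between `i` and `j`. -/
def cartan (a : I r → I r → ℕ) (i j : I r) : ℤ :=
  (if i = j then 2 else 0) - (a i j : ℤ)

/-- The symmetric bilinear form on `Q` determined by the Cartan pairing. -/
def B (a : I r → I r → ℕ) (α β : Q r) : ℤ :=
  ∑ i, ∑ j, α i * cartan r a i j * β j

/-- The reflection `s_i(α) = α − (α,e_i)·e_i`. -/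
def refl (a : I r → I r → ℕ) (i : I r) (α : Q r) : Q r :=
  α - B r a α (e r i) • e r i

/-- The Weyl group `W`: the group of bijections of `Q` generated by the reflections. -/
def W (a : I r → I r → ℕ) : Subgroup (Equiv.Perm (Q r)) :=
  Subgroup.closure {σ | ∃ i : I r, ∀ α, σ α = refl r a i α}

/-- The support of `α` is connected in the graph. -/
def SuppConnected (a : I r → I r → ℕ) (α : Q r) : Prop :=
  ∀ i j : I r, α i ≠ 0 → α j ≠ 0 →
    Relation.ReflTransGen (fun x y => α x ≠ 0 ∧ α y ≠ 0 ∧ 0 < a x y) i j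

/-- The fundamental region `F`: nonzero `α ∈ ℕ^I` with connected support and
`(α,e_i) ≤ 0` for all `i`. -/
def Fund (a : I r → I r → ℕ) : Set (Q r) :=
  {α | α ≠ 0 ∧ (∀ i, 0 ≤ α i) ∧ SuppConnected r a α ∧ ∀ i, B r a α (e r i) ≤ 0}

/-- The real roots: the `W`-orbits of the basis vectors. -/
def RealRoots (a : I r → I r → ℕ) : Set (Q r) :=
  {α | ∃ σ ∈ W r a, ∃ i, α = σ (e r i)}

/-- The imaginary roots: `W·F` and its negative. -/
def ImRoots (a : I r → I r → ℕ) : Set (Q r) :=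
  {α | ∃ σ ∈ W r a, ∃ β ∈ Fund r a, α = σ β ∨ α = -(σ β)}

/-- The root system `R`, consisting of all real and imaginary roots. -/
def Roots (a : I r → I r → ℕ) : Set (Q r) := RealRoots r a ∪ ImRoots r a

/-- The positive roots `R⁺ = R ∩ ℕ^I`. -/
def PosRoots (a : I r → I r → ℕ) : Set (Q r) :=
  {α ∈ Roots r a | ∀ i, 0 ≤ α i}

/-- `R_c = {α ∈ R : c(α) = 0}`. -/
def Rc (a : I r → I r → ℕ) (c : Q r →ₗ[ℤ] ℂ) : Set (Q r) :=
  {α ∈ Roots r a | c α = 0}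

/-- `R_c⁺ = R_c ∩ R⁺`. -/
def RcPos (a : I r → I r → ℕ) (c : Q r →ₗ[ℤ] ℂ) : Set (Q r) :=
  Rc r a c ∩ PosRoots r a

/-- `Δ(c)`: the minimal elements of `R_c⁺`, i.e. those which cannot be written as a sum
of two elements of `R_c⁺`. -/
def Dc (a : I r → I r → ℕ) (c : Q r →ₗ[ℤ] ℂ) : Set (Q r) :=
  {α ∈ RcPos r a c | ¬ ∃ β ∈ RcPos r a c, ∃ γ ∈ RcPos r a c, α = β + γ}

/-- The hypotheses characterizing a simply laced affine Dynkin graph, together with the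
distinguished imaginary root `δ`: the graph (with `a i j` edges between `i` and `j`) is
symmetric, loopless and connected; the Cartan form is positive semidefinite; and the
radical of the form is `ℤδ`, where `δ` has positive coordinates and `δ_0 = 1`. -/
structure AffineData (a : I r → I r → ℕ) (δ : Q r) : Prop where
  symm : ∀ i j, a i j = a j i
  noloops : ∀ i, a i i = 0
  connected : ∀ i j : I r, Relation.ReflTransGen (fun x y => 0 < a x y) i j
  posSemidef : ∀ α : Q r, 0 ≤ B r a α α
  delta_pos : ∀ i, 0 < δ i
  delta_zero : δ 0 = 1
  radical : ∀ α : Q r, (∀ β, B r a α β = 0) ↔ ∃ n : ℤ, α = n • δ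

end AffineRoots

namespace AffineRoots

/-- `p(α) = 1 − (1/2)(α,α)`, valued in `ℚ`. -/
def p (r : ℕ) (a : I r → I r → ℕ) (α : Q r) : ℚ :=
  1 - (B r a α α : ℚ) / 2

/-- `Σ_c`: the set of `α ∈ R_c⁺` such that `p(α) > p(β⁽¹⁾) + ⋯ + p(β⁽ᵏ⁾)` for every
decomposition `α = β⁽¹⁾ + ⋯ + β⁽ᵏ⁾` with `k ≥ 2` and all `β⁽ⁱ⁾ ∈ R_c⁺`. -/
def Sc (r : ℕ) (a : I r → I r → ℕ) (c : Q r →ₗ[ℤ] ℂ) : Set (Q r) :=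
  {α ∈ RcPos r a c |
    ∀ (k : ℕ) (f : Fin k → Q r), 2 ≤ k → (∀ t, f t ∈ RcPos r a c) →
      α = ∑ t, f t → ∑ t, p r a (f t) < p r a α}

end AffineRoots



namespace AffineRoots

section Aux
variable {r} {a : I r → I r → ℕ} {δ : Q r}

lemma B_e_apply (α : Q r) (i : I r) :
    B r a α (e r i) = ∑ i', α i' * cartan r a i' i := by
  unfold B e
  refine Finset.sum_congr rfl fun i' _ => ?_
  simp [Pi.single_apply, mul_ite]

lemma B_expand (α β : Q r) : B r a α β = ∑ j, B r a α (e r j) * β j := by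
  rw [show (B r a α β) = ∑ j, ∑ i, α i * cartan r a i j * β j from Finset.sum_comm]
  refine Finset.sum_congr rfl fun j _ => ?_
  rw [B_e_apply, Finset.sum_mul]

lemma cartan_symm (hs : ∀ i j, a i j = a j i) (i j : I r) :
    cartan r a i j = cartan r a j i := by
  rcases eq_or_ne i j with h | h
  · subst h; rfl
  · simp [cartan, hs i j, h, Ne.symm h]

lemma B_symm (hs : ∀ i j, a i j = a j i) (α β : Q r) : B r a α β = B r a β α := by
  unfold B
  rw [Finset.sum_comm]
  refine Finset.sum_congr rfl fun i _ => Finset.sum_congr rfl fun j _ => ?_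
  rw [cartan_symm hs]; ring

lemma B_add_left (α β γ : Q r) : B r a (α + β) γ = B r a α γ + B r a β γ := by
  unfold B
  rw [← Finset.sum_add_distrib]
  refine Finset.sum_congr rfl fun i _ => ?_
  rw [← Finset.sum_add_distrib]
  refine Finset.sum_congr rfl fun j _ => ?_
  simp [Pi.add_apply]; ring

lemma B_sub_left (α β γ : Q r) : B r a (α - β) γ = B r a α γ - B r a β γ := by
  unfold B
  rw [← Finset.sum_sub_distrib]
  refine Finset.sum_congr rfl fun i _ => ?_
  rw [← Finset.sum_sub_distrib]
  refine Finset.sum_congr rfl fun j _ => ?_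
  simp [Pi.sub_apply]; ring

lemma B_smul_left (n : ℤ) (α γ : Q r) : B r a (n • α) γ = n * B r a α γ := by
  unfold B
  rw [Finset.mul_sum]
  refine Finset.sum_congr rfl fun i _ => ?_
  rw [Finset.mul_sum]
  refine Finset.sum_congr rfl fun j _ => ?_
  simp [Pi.smul_apply, smul_eq_mul]; ring

lemma B_zero_left (γ : Q r) : B r a 0 γ = 0 := by
  unfold B; simp

lemma B_add_right (hs : ∀ i j, a i j = a j i) (α β γ : Q r) :
    B r a γ (α + β) = B r a γ α + B r a γ β := by
  rw [B_symm hs, B_add_left, B_symm hs α, B_symm hs β]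

lemma B_sub_right (hs : ∀ i j, a i j = a j i) (α β γ : Q r) :
    B r a γ (α - β) = B r a γ α - B r a γ β := by
  rw [B_symm hs, B_sub_left, B_symm hs α, B_symm hs β]

lemma B_smul_right (hs : ∀ i j, a i j = a j i) (n : ℤ) (α γ : Q r) :
    B r a γ (n • α) = n * B r a γ α := by
  rw [B_symm hs, B_smul_left, B_symm hs]

lemma B_sum_left {T : Type*} (s : Finset T) (f : T → Q r) (γ : Q r) :
    B r a (∑ t ∈ s, f t) γ = ∑ t ∈ s, B r a (f t) γ := by
  induction s using Finset.cons_induction with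
  | empty => simp [B_zero_left]
  | cons t s ht ih => rw [Finset.sum_cons, Finset.sum_cons, B_add_left, ih]

lemma B_sum_right (hs : ∀ i j, a i j = a j i) {T : Type*} (s : Finset T) (f : T → Q r) (γ : Q r) :
    B r a γ (∑ t ∈ s, f t) = ∑ t ∈ s, B r a γ (f t) := by
  rw [B_symm hs, B_sum_left]
  exact Finset.sum_congr rfl fun t _ => B_symm hs _ _

lemma B_ee (i j : I r) : B r a (e r i) (e r j) = cartan r a i j := by
  rw [B_e_apply]
  unfold e
  simp [Pi.single_apply, ite_mul]

lemma B_e_self (hl : ∀ i, a i i = 0) (i : I r) : B r a (e r i) (e r i) = 2 := by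
  rw [B_ee]; simp [cartan, hl]

lemma B_refl_refl (hs : ∀ i j, a i j = a j i) (hl : ∀ i, a i i = 0) (i : I r) (α β : Q r) :
    B r a (refl r a i α) (refl r a i β) = B r a α β := by
  unfold refl
  rw [B_sub_left, B_sub_right hs, B_sub_right hs, B_smul_left, B_smul_right hs,
    B_smul_right hs, B_smul_left, B_e_self hl, B_symm hs (e r i) β]
  ring

lemma refl_refl (hs : ∀ i j, a i j = a j i) (hl : ∀ i, a i i = 0) (i : I r) (α : Q r) :
    refl r a i (refl r a i α) = α := by
  unfold refl
  rw [B_sub_left, B_smul_left, B_e_self hl]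
  have : (B r a α (e r i) - B r a α (e r i) * 2) = -B r a α (e r i) := by ring
  rw [this]
  ext j
  simp [Pi.sub_apply, Pi.smul_apply, smul_eq_mul]

lemma refl_mem_W (hs : ∀ i j, a i j = a j i) (hl : ∀ i, a i i = 0) (i : I r) :
    ∃ σ ∈ W r a, ∀ α, σ α = refl r a i α :=
  ⟨⟨refl r a i, refl r a i, refl_refl hs hl i, refl_refl hs hl i⟩,
    Subgroup.subset_closure ⟨i, fun _ => rfl⟩, fun _ => rfl⟩

lemma W_B (hs : ∀ i j, a i j = a j i) (hl : ∀ i, a i i = 0) {σ : Equiv.Perm (Q r)}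
    (hσ : σ ∈ W r a) (α β : Q r) : B r a (σ α) (σ β) = B r a α β := by
  revert α β
  refine Subgroup.closure_induction (p := fun σ _ => ∀ α β, B r a (σ α) (σ β) = B r a α β)
    ?_ ?_ ?_ ?_ hσ
  · rintro σ ⟨i, hi⟩ α β
    rw [hi, hi, B_refl_refl hs hl]
  · intro α β; rfl
  · intro σ τ _ _ h1 h2 α β
    rw [Equiv.Perm.mul_apply, Equiv.Perm.mul_apply, h1, h2]
  · intro σ _ h α β
    have := h (σ⁻¹ α) (σ⁻¹ β)
    rw [Equiv.Perm.inv_def, Equiv.apply_symm_apply, Equiv.apply_symm_apply] at this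
    exact this.symm

lemma W_fix_delta (hrad : ∀ β, B r a δ β = 0) {σ : Equiv.Perm (Q r)}
    (hσ : σ ∈ W r a) (n : ℤ) : σ (n • δ) = n • δ := by
  revert n
  refine Subgroup.closure_induction (p := fun σ _ => ∀ n : ℤ, σ (n • δ) = n • δ)
    ?_ ?_ ?_ ?_ hσ
  · rintro σ ⟨i, hi⟩ n
    rw [hi]
    unfold refl
    rw [B_smul_left, hrad]
    simp
  · intro n; rfl
  · intro σ τ _ _ h1 h2 n
    rw [Equiv.Perm.mul_apply, h2, h1]
  · intro σ _ h n
    have := h n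
    rw [← this, Equiv.Perm.inv_def, Equiv.symm_apply_apply, this]

lemma realRoot_norm (hs : ∀ i j, a i j = a j i) (hl : ∀ i, a i i = 0) {α : Q r}
    (h : α ∈ RealRoots r a) : B r a α α = 2 := by
  obtain ⟨σ, hσ, i, rfl⟩ := h
  rw [W_B hs hl hσ, B_e_self hl]

end Aux

section Aux2
variable {r : ℕ} {a : I r → I r → ℕ} {δ : Q r}

lemma null_radical (hdata : AffineData r a δ) {γ : Q r} (h0 : B r a γ γ = 0) :
    ∃ n : ℤ, γ = n • δ := by
  rw [← hdata.radical]
  intro β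
  by_contra ht
  set t := B r a γ β with htdef
  set C := B r a β β with hCdef
  have key : ∀ n : ℤ, 0 ≤ 2 * n * t + C := by
    intro n
    have h := hdata.posSemidef (n • γ + β)
    simp only [B_add_left, B_add_right hdata.symm, B_smul_left,
      B_smul_right hdata.symm, h0] at h
    rw [B_symm hdata.symm β γ] at h
    nlinarith [h]
  have h1 := key (|C| + 1)
  have h2 := key (-(|C| + 1))
  have habs := abs_nonneg C
  have hC1 : C ≤ |C| := le_abs_self C
  rcases lt_or_gt_of_ne ht with hneg | hpos
  · nlinarith
  · nlinarith

lemma delta_rad (hdata : AffineData r a δ) : ∀ β, B r a δ β = 0 :=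
  (hdata.radical δ).mpr ⟨1, (one_smul _ _).symm⟩

/-- Every nonnegative vector of norm 2 is a real root. -/
lemma norm2_real (hdata : AffineData r a δ) :
    ∀ n : ℕ, ∀ γ : Q r, (∀ i, 0 ≤ γ i) → B r a γ γ = 2 → (∑ i, γ i) ≤ (n : ℤ) →
      γ ∈ RealRoots r a := by
  intro n
  induction n with
  | zero =>
    intro γ hpos h2 hle
    exfalso
    have hz : γ = 0 := by
      ext i
      have h1 : ∑ j, γ j ≤ 0 := hle
      have h3 : γ i ≤ ∑ j, γ j := Finset.single_le_sum (fun j _ => hpos j) (Finset.mem_univ i)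
      have := hpos i
      simp only [Pi.zero_apply]
      omega
    rw [hz, B_zero_left] at h2
    omega
  | succ n ih =>
    intro γ hpos h2 hle
    -- find i with γ i ≥ 1 and B γ e_i ≥ 1
    have hsum : ∑ i, B r a γ (e r i) * γ i = 2 := by rw [← B_expand]; exact h2
    have hex : ∃ i, 1 ≤ γ i ∧ 1 ≤ B r a γ (e r i) := by
      by_contra hco
      push_neg at hco
      have hnp : ∑ i, B r a γ (e r i) * γ i ≤ 0 := by
        refine Finset.sum_nonpos fun i _ => ?_
        rcases eq_or_lt_of_le (hpos i) with h0 | h1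
        · rw [← h0, mul_zero]
        · have hB := hco i h1
          exact mul_nonpos_of_nonpos_of_nonneg (by omega) (hpos i)
      omega
    obtain ⟨i, hγi, hBi⟩ := hex
    set t := B r a γ (e r i) with htdef
    by_cases hcase : t ≤ γ i
    · -- reflect and use induction hypothesis
      set γ'' := refl r a i γ with hγ''
      have hcoord : ∀ j, γ'' j = γ j - t * (e r i) j := by
        intro j
        simp [hγ'', refl, Pi.sub_apply, Pi.smul_apply, smul_eq_mul, htdef]
      have hei : ∀ j : I r, e r i j = if j = i then 1 else 0 := by
        intro j; simp [e, Pi.single_apply]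
      have hpos'' : ∀ j, 0 ≤ γ'' j := by
        intro j
        rw [hcoord j, hei j]
        rcases eq_or_ne j i with h | h
        · subst h; simp; omega
        · simp [h]; exact hpos j
      have h2'' : B r a γ'' γ'' = 2 := by
        rw [hγ'', B_refl_refl hdata.symm hdata.noloops, h2]
      have hsum'' : ∑ j, γ'' j ≤ (n : ℤ) := by
        have : ∑ j, γ'' j = (∑ j, γ j) - t := by
          rw [Finset.sum_congr rfl fun j _ => hcoord j, Finset.sum_sub_distrib,
            ← Finset.mul_sum]
          have : ∑ j, e r i j = 1 := by
            rw [Finset.sum_congr rfl fun j _ => hei j]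
            simp
          rw [this, mul_one]
        rw [this]
        push_cast at hle ⊢
        omega
      obtain ⟨σ, hσ, j, hj⟩ := ih γ'' hpos'' h2'' hsum''
      obtain ⟨σ₀, hσ₀, hσ₀eq⟩ := refl_mem_W hdata.symm hdata.noloops (a := a) i
      refine ⟨σ₀ * σ, mul_mem hσ₀ hσ, j, ?_⟩
      rw [Equiv.Perm.mul_apply, ← hj, hσ₀eq, hγ'', refl_refl hdata.symm hdata.noloops]
    · -- stuck case: γ = e i
      push_neg at hcase
      set γ' := γ - γ i • e r i with hγ'
      have hB' : B r a γ' γ' = 2 - 2 * γ i * t + 2 * (γ i) ^ 2 := by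
        rw [hγ', B_sub_left, B_sub_right hdata.symm, B_sub_right hdata.symm,
          B_smul_left, B_smul_right hdata.symm, B_smul_right hdata.symm, B_smul_left,
          B_e_self hdata.noloops, h2, B_symm hdata.symm (e r i) γ, ← htdef]
        ring
      have hB'0 : B r a γ' γ' = 0 := by
        have h1 := hdata.posSemidef γ'
        nlinarith
      obtain ⟨m, hm⟩ := null_radical hdata hB'0
      have hmi : γ' i = 0 := by
        rw [hγ']
        simp [Pi.sub_apply, Pi.smul_apply, smul_eq_mul, e, Pi.single_apply]
      have hm0 : m = 0 := by
        have := hdata.delta_pos i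
        have h1 : γ' i = m * δ i := by rw [hm]; simp [Pi.smul_apply, smul_eq_mul]
        rw [hmi] at h1
        rcases lt_trichotomy m 0 with h | h | h
        · nlinarith
        · exact h
        · nlinarith
      have hγi1 : γ i = 1 := by nlinarith [hB', hB'0, hcase, hγi]
      have hγeq : γ = γ i • e r i := by
        have : γ' = 0 := by rw [hm, hm0]; simp
        rw [hγ'] at this
        exact sub_eq_zero.mp this
      refine ⟨1, one_mem _, i, ?_⟩
      rw [hγeq, hγi1, one_smul]
      rfl

lemma rcpos_real {c : Q r →ₗ[ℤ] ℂ} (hdata : AffineData r a δ) (hc : c δ = -1)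
    {α : Q r} (hα : α ∈ RcPos r a c) :
    α ∈ RealRoots r a ∧ B r a α α = 2 ∧ (∀ i, 0 ≤ α i) ∧ c α = 0 := by
  obtain ⟨⟨hroot, hcα⟩, ⟨_, hpos⟩⟩ := hα
  have hreal : α ∈ RealRoots r a := by
    rcases hroot with h | h
    · exact h
    · exfalso
      obtain ⟨σ, hσ, β, hβF, hor⟩ := h
      -- β ∈ Fund forces β = n • δ with n > 0
      obtain ⟨hβ0, hβpos, _, hβB⟩ := hβF
      have hβnorm : B r a β β = 0 := by
        have h1 : B r a β β ≤ 0 := by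
          rw [B_expand]
          exact Finset.sum_nonpos fun j _ =>
            mul_nonpos_of_nonpos_of_nonneg (hβB j) (hβpos j)
        have h2 := hdata.posSemidef β
        omega
      obtain ⟨m, hm⟩ := null_radical hdata hβnorm
      have hmpos : 0 < m := by
        have h0 : β 0 = m * δ 0 := by rw [hm]; simp [Pi.smul_apply, smul_eq_mul]
        rw [hdata.delta_zero, mul_one] at h0
        have : 0 ≤ m := h0 ▸ hβpos 0
        rcases this.lt_or_eq with h | h
        · exact h
        · exfalso; apply hβ0; rw [hm, ← h, zero_smul]
      have hσβ : σ β = m • δ := by rw [hm]; exact W_fix_delta (delta_rad hdata) hσ m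
      have hcβ : c (σ β) = -(m : ℂ) := by
        rw [hσβ, map_smul, hc]
        simp [zsmul_eq_mul]
      have hmne : (m : ℂ) ≠ 0 := Int.cast_ne_zero.mpr (by omega)
      rcases hor with h | h
      · rw [h, hcβ] at hcα; exact hmne (by linear_combination -hcα)
      · rw [h, map_neg, hcβ] at hcα; exact hmne (by linear_combination hcα)
  exact ⟨hreal, realRoot_norm hdata.symm hdata.noloops hreal, hpos, hcα⟩

lemma p_zero {c : Q r →ₗ[ℤ] ℂ} (hdata : AffineData r a δ) (hc : c δ = -1)
    {α : Q r} (hα : α ∈ RcPos r a c) : p r a α = 0 := by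
  obtain ⟨_, hB, _, _⟩ := rcpos_real hdata hc hα
  rw [p, hB]
  norm_num

/-- The key lemma: a root in `R_c⁺` admitting a decomposition into `k ≥ 2` parts in
`R_c⁺` admits a decomposition into two parts in `R_c⁺`. -/
lemma two_decomp {c : Q r →ₗ[ℤ] ℂ} (hdata : AffineData r a δ) (hc : c δ = -1)
    {α : Q r} (hα : α ∈ RcPos r a c) {k : ℕ} (f : Fin k → Q r) (hk : 2 ≤ k)
    (hf : ∀ t, f t ∈ RcPos r a c) (hsum : α = ∑ t, f t) :
    ∃ β ∈ RcPos r a c, ∃ γ ∈ RcPos r a c, α = β + γ := by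
  obtain ⟨hαreal, hαB, hαpos, hαc⟩ := rcpos_real hdata hc hα
  have hBsum : ∑ t, B r a α (f t) = 2 := by
    rw [← B_sum_right hdata.symm, ← hsum, hαB]
  have hex : ∃ t, 1 ≤ B r a α (f t) := by
    by_contra hco
    push_neg at hco
    have : ∑ t, B r a α (f t) ≤ 0 := Finset.sum_nonpos fun t _ => by
      have := hco t; omega
    omega
  obtain ⟨t, ht⟩ := hex
  obtain ⟨hfreal, hfB, hfpos, hfc⟩ := rcpos_real hdata hc (hf t)
  set γ := α - f t with hγdef
  have hγsum : γ = ∑ s ∈ Finset.univ.erase t, f s := by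
    rw [hγdef, hsum, ← Finset.add_sum_erase _ f (Finset.mem_univ t)]
    ring
  have hγpos : ∀ i, 0 ≤ γ i := by
    intro i
    have : γ i = ∑ s ∈ Finset.univ.erase t, f s i := by
      rw [hγsum]; simp [Finset.sum_apply]
    rw [this]
    exact Finset.sum_nonneg fun s _ => (rcpos_real hdata hc (hf s)).2.2.1 i
  have hγc : c γ = 0 := by rw [hγdef, map_sub, hαc, hfc, sub_zero]
  have hBle : B r a α (f t) ≤ 2 := by
    have h1 := hdata.posSemidef (α - f t)
    rw [B_sub_left, B_sub_right hdata.symm, B_sub_right hdata.symm, hαB, hfB,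
      B_symm hdata.symm (f t) α] at h1
    omega
  have hγB : B r a γ γ = 4 - 2 * B r a α (f t) := by
    rw [hγdef, B_sub_left, B_sub_right hdata.symm, B_sub_right hdata.symm, hαB, hfB,
      B_symm hdata.symm (f t) α]
    ring
  have hcases : B r a α (f t) = 1 ∨ B r a α (f t) = 2 := by omega
  rcases hcases with hB | hB
  · -- B = 1 : γ is a real root, giving the 2-decomposition
    have hγB2 : B r a γ γ = 2 := by rw [hγB, hB]; ring
    have hγreal : γ ∈ RealRoots r a :=
      norm2_real hdata (∑ i, γ i).toNat γ hγpos hγB2 (by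
        rcases Int.eq_ofNat_of_zero_le (Finset.sum_nonneg fun i _ => hγpos i) with ⟨m, hm⟩
        rw [hm]; simp)
    refine ⟨f t, hf t, γ, ⟨⟨Or.inl hγreal, hγc⟩, Or.inl hγreal, hγpos⟩, ?_⟩
    rw [hγdef]; ring
  · -- B = 2 : impossible, leads to a zero part
    exfalso
    have hγB0 : B r a γ γ = 0 := by rw [hγB, hB]; ring
    obtain ⟨m, hm⟩ := null_radical hdata hγB0
    have hm0 : m = 0 := by
      have : c γ = -(m : ℂ) := by
        rw [hm, map_smul, hc]; simp [zsmul_eq_mul]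
      rw [hγc] at this
      have h0 : (m : ℂ) = 0 := by rw [← neg_eq_zero]; exact this.symm
      exact_mod_cast h0
    have hγ0 : γ = 0 := by rw [hm, hm0, zero_smul]
    -- pick another index s ≠ t; then f s = 0, contradicting its norm 2
    have hk1 : 1 < (Finset.univ : Finset (Fin k)).card := by simp; omega
    obtain ⟨s, -, hst⟩ := Finset.exists_mem_ne hk1 t
    obtain ⟨_, hsB, hspos, _⟩ := rcpos_real hdata hc (hf s)
    have hfs0 : f s = 0 := by
      have hzero : ∀ i, ∑ u ∈ Finset.univ.erase t, f u i = 0 := by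
        intro i
        have : γ i = ∑ u ∈ Finset.univ.erase t, f u i := by
          rw [hγsum]; simp [Finset.sum_apply]
        rw [hγ0] at this
        exact this.symm
      ext i
      have hmem : s ∈ Finset.univ.erase t := Finset.mem_erase.mpr ⟨hst, Finset.mem_univ s⟩
      have hle : f s i ≤ ∑ u ∈ Finset.univ.erase t, f u i :=
        Finset.single_le_sum (fun u _ => (rcpos_real hdata hc (hf u)).2.2.1 i) hmem
      have := hspos i
      rw [hzero i] at hle
      simp
      omega
    rw [hfs0, B_zero_left] at hsB
    omega

end Aux2

end AffineRoots


open AffineRoots in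
/-- Assume `c(δ) = −1`.  Then `Σ_c = Δ(c)`; that is, a positive root `α` with `c(α) = 0`
satisfies `p(α) > p(β⁽¹⁾) + ⋯ + p(β⁽ᵏ⁾)` for every decomposition `α = β⁽¹⁾ + ⋯ + β⁽ᵏ⁾`
with `k ≥ 2` and all `β⁽ⁱ⁾ ∈ R_c⁺` if and only if `α` cannot be written as a sum of two
elements of `R_c⁺`. -/
theorem Sc_eq_Dc (r : ℕ) (a : I r → I r → ℕ) (δ : Q r)
    (hdata : AffineData r a δ) (c : Q r →ₗ[ℤ] ℂ) (hc : c δ = -1) :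
    Sc r a c = Dc r a c := by
  ext α
  constructor
  · rintro ⟨hα, hS⟩
    refine ⟨hα, ?_⟩
    rintro ⟨β, hβ, γ, hγ, hαβγ⟩
    have h2 := hS 2 ![β, γ] le_rfl (by
      intro t
      fin_cases t <;> simpa using ‹_›) (by
        rw [Fin.sum_univ_two]
        simpa using hαβγ)
    rw [Fin.sum_univ_two] at h2
    simp only [Matrix.cons_val_zero, Matrix.cons_val_one, Matrix.head_cons] at h2
    rw [p_zero hdata hc hα, p_zero hdata hc hβ, p_zero hdata hc hγ] at h2
    simp at h2
  · rintro ⟨hα, hD⟩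
    refine ⟨hα, ?_⟩
    intro k f hk hf hsum
    exact absurd (two_decomp hdata hc hα f hk hf hsum) hD
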